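/- Bob anticommutator bound: Let S = (ψ, A0, A1, B0, B1) be a CHSH strategy on finite-dimensional complex inner product spaces H_A, H_B, let ε ≥ 0, and suppose the bias satisfies β(S) ≥ 2√2 − ε. Then Re⟨ψ, (I ⊗ (B0B1 + B1B0)²) ψ⟩ ≤ c·ε, where c := 128√2. -/

import Mathlib

set_option maxHeartbeats 1000000
set_option synthInstance.maxHeartbeats 400000
set_option synthInstance.maxSize 2048

noncomputable section

open scoped TensorProduct
open Module

/-! ## The canonical inner product space structure on tensor products -/

section TensorInner

variable (E F : Type*) [NormedAddCommGroup E] [InnerProductSpace ℂ E] [FiniteDimensional ℂ E]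
  [NormedAddCommGroup F] [InnerProductSpace ℂ F] [FiniteDimensional ℂ F]

/-- Coordinate representation of `E ⊗[ℂ] F` with respect to the tensor product of
orthonormal bases of `E` and `F`. -/
def tensorRepr : (E ⊗[ℂ] F) ≃ₗ[ℂ]
    EuclideanSpace ℂ (Fin (finrank ℂ E) × Fin (finrank ℂ F)) :=
  (((stdOrthonormalBasis ℂ E).toBasis.tensorProduct
      (stdOrthonormalBasis ℂ F).toBasis).equivFun).trans
    (WithLp.linearEquiv 2 ℂ ((Fin (finrank ℂ E) × Fin (finrank ℂ F)) → ℂ)).symm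

/-- The canonical inner product on the tensor product of two finite-dimensional complex
inner product spaces; it satisfies `⟪a ⊗ b, c ⊗ d⟫ = ⟪a, c⟫ * ⟪b, d⟫`. -/
def tensorCore : InnerProductSpace.Core ℂ (E ⊗[ℂ] F) where
  inner x y := inner ℂ (tensorRepr E F x) (tensorRepr E F y)
  conj_inner_symm x y := inner_conj_symm (𝕜 := ℂ) (tensorRepr E F x) (tensorRepr E F y)
  re_inner_nonneg x := inner_self_nonneg (𝕜 := ℂ) (x := tensorRepr E F x)
  add_left x y z := by simp [map_add, inner_add_left]
  smul_left x y r := by simp [map_smul, inner_smul_left, mul_comm]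
  definite x h := by
    have h0 : tensorRepr E F x = 0 := inner_self_eq_zero.mp h
    simpa using (LinearEquiv.map_eq_zero_iff _).mp h0

noncomputable instance tensorNormedAddCommGroup : NormedAddCommGroup (E ⊗[ℂ] F) :=
  (tensorCore E F).toNormedAddCommGroup

noncomputable instance tensorInnerProductSpace : InnerProductSpace ℂ (E ⊗[ℂ] F) :=
  InnerProductSpace.ofCore (tensorCore E F).toCore

end TensorInner

notation "⟪" x ", " y "⟫" => (inner (𝕜 := ℂ) x y)

/-! ## Qubits, standard states and gates -/

/-- The qubit space `ℂ²`. -/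
abbrev Qubit := EuclideanSpace ℂ (Fin 2)

/-- The standard basis state `|0⟩`. -/
def ket0 : Qubit := EuclideanSpace.single 0 1

/-- The standard basis state `|1⟩`. -/
def ket1 : Qubit := EuclideanSpace.single 1 1

/-- The rank-one operator `|a⟩⟨b|` on an inner product space. -/
def ketbra {H : Type*} [NormedAddCommGroup H] [InnerProductSpace ℂ H] (a b : H) :
    H →ₗ[ℂ] H where
  toFun v := (inner ℂ b v : ℂ) • a
  map_add' u v := by simp [inner_add_right, add_smul]
  map_smul' c v := by simp [inner_smul_right, smul_smul]

/-- The projector `|0⟩⟨0|`. -/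
def proj0 : Qubit →ₗ[ℂ] Qubit := ketbra ket0 ket0

/-- The projector `|1⟩⟨1|`. -/
def proj1 : Qubit →ₗ[ℂ] Qubit := ketbra ket1 ket1

/-- The Pauli operator `σ_z = |0⟩⟨0| - |1⟩⟨1|`. -/
def pauliZ : Qubit →ₗ[ℂ] Qubit := ketbra ket0 ket0 - ketbra ket1 ket1

/-- The Pauli operator `σ_x = |0⟩⟨1| + |1⟩⟨0|`. -/
def pauliX : Qubit →ₗ[ℂ] Qubit := ketbra ket0 ket1 + ketbra ket1 ket0

/-- The Hadamard gate `H = (Z + X)/√2`. -/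
def Hadamard : Qubit →ₗ[ℂ] Qubit := ((Real.sqrt 2 : ℂ))⁻¹ • (pauliZ + pauliX)

/-- The reflected Hadamard gate `H' = (Z - X)/√2`. -/
def HadamardPrime : Qubit →ₗ[ℂ] Qubit := ((Real.sqrt 2 : ℂ))⁻¹ • (pauliZ - pauliX)

/-- The rotation `R = sin(π/8)·X + cos(π/8)·Z`, satisfying `RZR† = H`, `RXR† = H'`. -/
def Rotation : Qubit →ₗ[ℂ] Qubit :=
  (Real.sin (Real.pi / 8) : ℂ) • pauliX + (Real.cos (Real.pi / 8) : ℂ) • pauliZ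

/-! ## Bell states -/

/-- The Bell state `|Φ+⟩ = (|00⟩ + |11⟩)/√2`. -/
def bellPhiPlus : Qubit ⊗[ℂ] Qubit :=
  ((Real.sqrt 2 : ℂ))⁻¹ • (ket0 ⊗ₜ[ℂ] ket0 + ket1 ⊗ₜ[ℂ] ket1)

/-- The Bell state `|Φ−⟩ = (|00⟩ − |11⟩)/√2`. -/
def bellPhiMinus : Qubit ⊗[ℂ] Qubit :=
  ((Real.sqrt 2 : ℂ))⁻¹ • (ket0 ⊗ₜ[ℂ] ket0 - ket1 ⊗ₜ[ℂ] ket1)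

/-- The Bell state `|Ψ+⟩ = (|01⟩ + |10⟩)/√2`. -/
def bellPsiPlus : Qubit ⊗[ℂ] Qubit :=
  ((Real.sqrt 2 : ℂ))⁻¹ • (ket0 ⊗ₜ[ℂ] ket1 + ket1 ⊗ₜ[ℂ] ket0)

/-- The Bell state `|Ψ−⟩ = (|01⟩ − |10⟩)/√2`. -/
def bellPsiMinus : Qubit ⊗[ℂ] Qubit :=
  ((Real.sqrt 2 : ℂ))⁻¹ • (ket0 ⊗ₜ[ℂ] ket1 - ket1 ⊗ₜ[ℂ] ket0)

/-! ## Binary observables and CHSH strategies -/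

/-- A binary observable: a symmetric (self-adjoint) involution. -/
structure IsBinaryObservable {H : Type*} [NormedAddCommGroup H] [InnerProductSpace ℂ H]
    (A : H →ₗ[ℂ] H) : Prop where
  symm : A.IsSymmetric
  sq_one : A ∘ₗ A = LinearMap.id

variable {H_A H_B : Type*}
  [NormedAddCommGroup H_A] [InnerProductSpace ℂ H_A] [FiniteDimensional ℂ H_A]
  [NormedAddCommGroup H_B] [InnerProductSpace ℂ H_B] [FiniteDimensional ℂ H_B]

/-- A CHSH strategy: a shared unit state together with two binary observables per party. -/
structure CHSHStrategy (H_A H_B : Type*)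
    [NormedAddCommGroup H_A] [InnerProductSpace ℂ H_A] [FiniteDimensional ℂ H_A]
    [NormedAddCommGroup H_B] [InnerProductSpace ℂ H_B] [FiniteDimensional ℂ H_B] where
  psi : H_A ⊗[ℂ] H_B
  psi_norm : ‖psi‖ = 1
  A0 : H_A →ₗ[ℂ] H_A
  A1 : H_A →ₗ[ℂ] H_A
  B0 : H_B →ₗ[ℂ] H_B
  B1 : H_B →ₗ[ℂ] H_B
  A0_bin : IsBinaryObservable A0
  A1_bin : IsBinaryObservable A1
  B0_bin : IsBinaryObservable B0
  B1_bin : IsBinaryObservable B1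

/-- The general CHSH operator `A0⊗B0 + A0⊗B1 + A1⊗B0 − A1⊗B1`. -/
def CHSH_op (A0 A1 : H_A →ₗ[ℂ] H_A) (B0 B1 : H_B →ₗ[ℂ] H_B) :
    H_A ⊗[ℂ] H_B →ₗ[ℂ] H_A ⊗[ℂ] H_B :=
  TensorProduct.map A0 B0 + TensorProduct.map A0 B1 +
    TensorProduct.map A1 B0 - TensorProduct.map A1 B1

/-- The CHSH bias `β(S) = Re⟨ψ, CHSH ψ⟩` of a strategy. -/
def chshBias (S : CHSHStrategy H_A H_B) : ℝ :=
  (⟪S.psi, (CHSH_op S.A0 S.A1 S.B0 S.B1) S.psi⟫).re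

/-- Alice's observable acting on the shared state. -/
def applyAlice (A : H_A →ₗ[ℂ] H_A) : H_A ⊗[ℂ] H_B →ₗ[ℂ] H_A ⊗[ℂ] H_B :=
  TensorProduct.map A LinearMap.id

/-- Bob's observable acting on the shared state. -/
def applyBob (B : H_B →ₗ[ℂ] H_B) : H_A ⊗[ℂ] H_B →ₗ[ℂ] H_A ⊗[ℂ] H_B :=
  TensorProduct.map LinearMap.id B

/-! ## The extraction circuit -/

variable {H : Type*} [NormedAddCommGroup H] [InnerProductSpace ℂ H] [FiniteDimensional ℂ H]

/-- Ancilla embedding `v ↦ |aux⟩ ⊗ v`. -/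
def embed (aux : Qubit) : H →ₗ[ℂ] (Qubit ⊗[ℂ] H) :=
  (TensorProduct.mk ℂ Qubit H) aux

/-- Controlled gate `|0⟩⟨0| ⊗ I + |1⟩⟨1| ⊗ A`. -/
def controlGate (A : H →ₗ[ℂ] H) : (Qubit ⊗[ℂ] H) →ₗ[ℂ] (Qubit ⊗[ℂ] H) :=
  TensorProduct.map proj0 (LinearMap.id : H →ₗ[ℂ] H) + TensorProduct.map proj1 A

/-- The extraction unitary `U_A = C_{A1}(H ⊗ I)C_{A0}(H ⊗ I)`. -/
def unitaryUA (A0 A1 : H →ₗ[ℂ] H) : (Qubit ⊗[ℂ] H) →ₗ[ℂ] (Qubit ⊗[ℂ] H) :=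
  (controlGate A1) ∘ₗ (TensorProduct.map Hadamard LinearMap.id) ∘ₗ
    (controlGate A0) ∘ₗ (TensorProduct.map Hadamard LinearMap.id)

/-- Alice's extractor `V_A = U_A (|0⟩ ⊗ ·)`. -/
def VA (A0 A1 : H →ₗ[ℂ] H) : H →ₗ[ℂ] (Qubit ⊗[ℂ] H) :=
  (unitaryUA A0 A1) ∘ₗ (embed ket0)

/-- Bob's rotated extraction unitary `U_B = (R ⊗ I) U_A(B0,B1) (R† ⊗ I)`. -/
def unitaryUB (B0 B1 : H →ₗ[ℂ] H) : (Qubit ⊗[ℂ] H) →ₗ[ℂ] (Qubit ⊗[ℂ] H) :=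
  (TensorProduct.map Rotation LinearMap.id) ∘ₗ (unitaryUA B0 B1) ∘ₗ
    (TensorProduct.map (LinearMap.adjoint Rotation) LinearMap.id)

/-- Bob's rotated ancilla `|aux⟩ = R|0⟩`. -/
def auxState : Qubit := Rotation ket0

/-- Bob's extractor `V_B = U_B (|aux⟩ ⊗ ·)`. -/
def VB (B0 B1 : H →ₗ[ℂ] H) : H →ₗ[ℂ] (Qubit ⊗[ℂ] H) :=
  (unitaryUB B0 B1) ∘ₗ (embed auxState)

/-! ## Tensor regrouping -/

/-- The canonical regrouping isomorphism
`(ℂ² ⊗ H_A) ⊗ (ℂ² ⊗ H_B) ≃ (ℂ² ⊗ ℂ²) ⊗ (H_A ⊗ H_B)`. -/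
def regSwap (H_A H_B : Type*)
    [NormedAddCommGroup H_A] [InnerProductSpace ℂ H_A] [FiniteDimensional ℂ H_A]
    [NormedAddCommGroup H_B] [InnerProductSpace ℂ H_B] [FiniteDimensional ℂ H_B] :
    ((Qubit ⊗[ℂ] H_A) ⊗[ℂ] (Qubit ⊗[ℂ] H_B)) ≃ₗ[ℂ]
      ((Qubit ⊗[ℂ] Qubit) ⊗[ℂ] (H_A ⊗[ℂ] H_B)) :=
  (TensorProduct.assoc ℂ Qubit H_A (Qubit ⊗[ℂ] H_B)).trans <|
    (TensorProduct.congr (LinearEquiv.refl ℂ Qubit)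
      (((TensorProduct.assoc ℂ H_A Qubit H_B).symm.trans
        (TensorProduct.congr (TensorProduct.comm ℂ H_A Qubit) (LinearEquiv.refl ℂ H_B))).trans
          (TensorProduct.assoc ℂ Qubit H_A H_B))).trans
      (TensorProduct.assoc ℂ Qubit Qubit (H_A ⊗[ℂ] H_B)).symm

/-! ## The canonical two-qubit CHSH operator and the constants -/

/-- The canonical two-qubit CHSH operator `K = Z⊗H + Z⊗H' + X⊗H − X⊗H'`. -/
def K : (Qubit ⊗[ℂ] Qubit) →ₗ[ℂ] (Qubit ⊗[ℂ] Qubit) :=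
  TensorProduct.map pauliZ Hadamard + TensorProduct.map pauliZ HadamardPrime +
    TensorProduct.map pauliX Hadamard - TensorProduct.map pauliX HadamardPrime

/-- The constant `c = 128√2` in the anticommutator bounds. -/
def cConst : ℝ := 128 * Real.sqrt 2

/-- The error function `δ(ε) = ε + 4√(cε)`. -/
def delta (ε : ℝ) : ℝ := ε + 4 * Real.sqrt (cConst * ε)

end

attribute [-instance] tensorNormedAddCommGroup tensorInnerProductSpace

section AuxLemmas
open scoped TensorProduct
open Module
set_option linter.unusedSectionVars false

variable {E F : Type*} [NormedAddCommGroup E] [InnerProductSpace ℂ E] [FiniteDimensional ℂ E]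
  [NormedAddCommGroup F] [InnerProductSpace ℂ F] [FiniteDimensional ℂ F]

lemma inner_tmul_tmul (a c : E) (b d : F) :
    ⟪a ⊗ₜ[ℂ] b, c ⊗ₜ[ℂ] d⟫ = ⟪a, c⟫ * ⟪b, d⟫ := by
  exact TensorProduct.inner_tmul ℂ a c b d

lemma norm_bridge (x : E ⊗[ℂ] F) :
    @norm _ (tensorNormedAddCommGroup E F).toNorm x = ‖x‖ := by
  have h1 : @norm _ (tensorNormedAddCommGroup E F).toNorm x = ‖tensorRepr E F x‖ := by
    show Real.sqrt (RCLike.re (inner ℂ (tensorRepr E F x) (tensorRepr E F x))) = _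
    rw [norm_eq_sqrt_re_inner (𝕜 := ℂ)]
  have h2 : tensorRepr E F x
      = ((stdOrthonormalBasis ℂ E).tensorProduct (stdOrthonormalBasis ℂ F)).repr x := by
    ext i
    simp [tensorRepr, ← OrthonormalBasis.toBasis_tensorProduct]
  rw [h1, h2, LinearIsometryEquiv.norm_map]

end AuxLemmas

section AuxLemmas2
open scoped TensorProduct
set_option linter.unusedSectionVars false

variable {E F : Type*} [NormedAddCommGroup E] [InnerProductSpace ℂ E] [FiniteDimensional ℂ E]
  [NormedAddCommGroup F] [InnerProductSpace ℂ F] [FiniteDimensional ℂ F]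

lemma map_isSymmetric {A : E →ₗ[ℂ] E} {B : F →ₗ[ℂ] F}
    (hA : A.IsSymmetric) (hB : B.IsSymmetric) :
    (TensorProduct.map A B).IsSymmetric := by
  intro x y
  induction x using TensorProduct.induction_on with
  | zero => simp
  | tmul a b =>
    induction y using TensorProduct.induction_on with
    | zero => simp
    | tmul c d =>
      simp only [TensorProduct.map_tmul, inner_tmul_tmul, hA a c, hB b d]
    | add y1 y2 h1 h2 =>
      simp only [map_add, inner_add_right, h1, h2]
  | add x1 x2 h1 h2 =>
    simp only [map_add, inner_add_left, h1, h2]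

lemma isBinaryObservable_id : IsBinaryObservable (LinearMap.id : E →ₗ[ℂ] E) :=
  ⟨LinearMap.IsSymmetric.id, rfl⟩

lemma norm_map_bin_apply {A : E →ₗ[ℂ] E} {B : F →ₗ[ℂ] F}
    (hA : IsBinaryObservable A) (hB : IsBinaryObservable B) (x : E ⊗[ℂ] F) :
    ‖TensorProduct.map A B x‖ = ‖x‖ := by
  have hsym := map_isSymmetric hA.symm hB.symm
  have hsq : (TensorProduct.map A B) ∘ₗ (TensorProduct.map A B) = LinearMap.id := by
    rw [← TensorProduct.map_comp, hA.sq_one, hB.sq_one, TensorProduct.map_id]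
  have h2 : ‖TensorProduct.map A B x‖ ^ 2 = ‖x‖ ^ 2 := by
    rw [← inner_self_eq_norm_sq (𝕜 := ℂ), ← inner_self_eq_norm_sq (𝕜 := ℂ)]
    rw [hsym x (TensorProduct.map A B x)]
    have : TensorProduct.map A B (TensorProduct.map A B x) = x := by
      have := congrArg (fun f => f x) hsq
      simpa using this
    rw [this]
  have := congrArg Real.sqrt h2
  simpa [Real.sqrt_sq, norm_nonneg] using this

end AuxLemmas2

open scoped TensorProduct
open Module

private lemma chsh_arith1 (s e a b nu nv nP nM : ℝ) (hs2 : s ^ 2 = 2) (hs0 : 0 ≤ s)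
    (hpar : nP ^ 2 + nM ^ 2 = 4) (hu2 : nu ^ 2 = 2 - 2 * s * a + nP ^ 2)
    (hv2 : nv ^ 2 = 2 - 2 * s * b + nM ^ 2)
    (hbias : a + b ≥ 2 * s - e) (hnv : 0 ≤ nv) : nu ^ 2 ≤ 2 * s * e := by
  nlinarith [sq_nonneg nv, mul_le_mul_of_nonneg_left hbias (by linarith : (0:ℝ) ≤ 2 * s)]

private lemma chsh_arith2 (s e nu nD : ℝ) (hs2 : s ^ 2 = 2) (hs1 : 1 ≤ s) (he : 0 ≤ e)
    (hnu : 0 ≤ nu) (hnD : 0 ≤ nD) (hD : nD ≤ (s + 2) * nu) (hu : nu ^ 2 ≤ 2 * s * e) :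
    nD ^ 2 ≤ 128 * s * e := by
  nlinarith [mul_le_mul hD hD hnD (by positivity), sq_nonneg nu, mul_nonneg he (by linarith : (0:ℝ) ≤ s)]

set_option maxHeartbeats 4000000 in
/-- **Bob anticommutator bound.** -/
theorem bob_anticommutator_bound
    {H_A H_B : Type*}
    [NormedAddCommGroup H_A] [InnerProductSpace ℂ H_A] [FiniteDimensional ℂ H_A]
    [NormedAddCommGroup H_B] [InnerProductSpace ℂ H_B] [FiniteDimensional ℂ H_B]
    (S : CHSHStrategy H_A H_B) (ε : ℝ) (hε : 0 ≤ ε)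
    (hBias : chshBias S ≥ 2 * Real.sqrt 2 - ε) :
    (⟪S.psi, (TensorProduct.map (LinearMap.id : H_A →ₗ[ℂ] H_A)
        ((S.B0 ∘ₗ S.B1 + S.B1 ∘ₗ S.B0) ∘ₗ (S.B0 ∘ₗ S.B1 + S.B1 ∘ₗ S.B0))) S.psi⟫).re
      ≤ cConst * ε := by
  obtain ⟨ψ, hψ, A0, A1, B0, B1, hA0, hA1, hB0, hB1⟩ := S
  rw [norm_bridge] at hψ
  simp only [chshBias, CHSH_op, LinearMap.add_apply, LinearMap.sub_apply,
    inner_add_right, inner_sub_right, Complex.add_re, Complex.sub_re] at hBias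
  simp only at hBias ⊢
  set s : ℝ := Real.sqrt 2 with hs
  have hs0 : 0 ≤ s := Real.sqrt_nonneg 2
  have hs2 : s ^ 2 = 2 := Real.sq_sqrt (by norm_num)
  have hs1 : (1 : ℝ) ≤ s := by nlinarith
  -- operators
  set T0 : H_A ⊗[ℂ] H_B →ₗ[ℂ] H_A ⊗[ℂ] H_B :=
    TensorProduct.map A0 LinearMap.id with hT0def
  set T1 : H_A ⊗[ℂ] H_B →ₗ[ℂ] H_A ⊗[ℂ] H_B :=
    TensorProduct.map A1 LinearMap.id with hT1def
  set Q0 : H_A ⊗[ℂ] H_B →ₗ[ℂ] H_A ⊗[ℂ] H_B :=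
    TensorProduct.map LinearMap.id B0 with hQ0def
  set Q1 : H_A ⊗[ℂ] H_B →ₗ[ℂ] H_A ⊗[ℂ] H_B :=
    TensorProduct.map LinearMap.id B1 with hQ1def
  -- composition facts
  have mapAB : ∀ (A : H_A →ₗ[ℂ] H_A) (B : H_B →ₗ[ℂ] H_B),
      (TensorProduct.map A LinearMap.id) ∘ₗ (TensorProduct.map LinearMap.id B)
        = TensorProduct.map A B := by
    intro A B; rw [← TensorProduct.map_comp]; simp
  have mapBA : ∀ (A : H_A →ₗ[ℂ] H_A) (B : H_B →ₗ[ℂ] H_B),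
      (TensorProduct.map LinearMap.id B) ∘ₗ (TensorProduct.map A LinearMap.id)
        = TensorProduct.map A B := by
    intro A B; rw [← TensorProduct.map_comp]; simp
  -- symmetry
  have hT0sym : T0.IsSymmetric := map_isSymmetric hA0.symm LinearMap.IsSymmetric.id
  have hT1sym : T1.IsSymmetric := map_isSymmetric hA1.symm LinearMap.IsSymmetric.id
  have hQ0sym : Q0.IsSymmetric := map_isSymmetric LinearMap.IsSymmetric.id hB0.symm
  have hQ1sym : Q1.IsSymmetric := map_isSymmetric LinearMap.IsSymmetric.id hB1.symm
  -- norms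
  have hnT0 : ∀ x, ‖T0 x‖ = ‖x‖ := fun x => norm_map_bin_apply hA0 isBinaryObservable_id x
  have hnQ0 : ∀ x, ‖Q0 x‖ = ‖x‖ := fun x => norm_map_bin_apply isBinaryObservable_id hB0 x
  have hnQ1 : ∀ x, ‖Q1 x‖ = ‖x‖ := fun x => norm_map_bin_apply isBinaryObservable_id hB1 x
  -- commutation and involution (pointwise)
  have comm0 : ∀ x, Q0 (T0 x) = T0 (Q0 x) := fun x =>
    congrArg (fun f => f x) ((mapBA A0 B0).trans (mapAB A0 B0).symm)
  have comm1 : ∀ x, Q1 (T0 x) = T0 (Q1 x) := fun x =>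
    congrArg (fun f => f x) ((mapBA A0 B1).trans (mapAB A0 B1).symm)
  have invT0 : ∀ x, T0 (T0 x) = x := by
    intro x
    have h : T0 ∘ₗ T0 = LinearMap.id := by
      rw [hT0def, ← TensorProduct.map_comp, hA0.sq_one]
      simp [TensorProduct.map_id]
    exact congrArg (fun f => f x) h
  have invQ0 : ∀ x, Q0 (Q0 x) = x := by
    intro x
    have h : Q0 ∘ₗ Q0 = LinearMap.id := by
      rw [hQ0def, ← TensorProduct.map_comp, hB0.sq_one]
      simp [TensorProduct.map_id]
    exact congrArg (fun f => f x) h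
  have invQ1 : ∀ x, Q1 (Q1 x) = x := by
    intro x
    have h : Q1 ∘ₗ Q1 = LinearMap.id := by
      rw [hQ1def, ← TensorProduct.map_comp, hB1.sq_one]
      simp [TensorProduct.map_id]
    exact congrArg (fun f => f x) h
  -- key vectors
  set P : H_A ⊗[ℂ] H_B := Q0 ψ + Q1 ψ with hP
  set Mv : H_A ⊗[ℂ] H_B := Q0 ψ - Q1 ψ with hMv
  set u : H_A ⊗[ℂ] H_B := (s : ℂ) • T0 ψ - P with hu
  set v : H_A ⊗[ℂ] H_B := (s : ℂ) • T1 ψ - Mv with hv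
  -- scalar facts
  have hsmul_norm : ∀ (x : H_A ⊗[ℂ] H_B), ‖(s : ℂ) • x‖ = s * ‖x‖ := by
    intro x
    rw [norm_smul]
    simp [abs_of_nonneg hs0]
  have hre_smul : ∀ (x y : H_A ⊗[ℂ] H_B), (⟪(s : ℂ) • x, y⟫).re = s * (⟪x, y⟫).re := by
    intro x y
    rw [inner_smul_left (𝕜 := ℂ) x y (s : ℂ)]
    simp [Complex.conj_ofReal]
  -- bias identification
  have c00 : T0 (Q0 ψ) = TensorProduct.map A0 B0 ψ := congrArg (fun f => f ψ) (mapAB A0 B0)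
  have c01 : T0 (Q1 ψ) = TensorProduct.map A0 B1 ψ := congrArg (fun f => f ψ) (mapAB A0 B1)
  have c10 : T1 (Q0 ψ) = TensorProduct.map A1 B0 ψ := congrArg (fun f => f ψ) (mapAB A1 B0)
  have c11 : T1 (Q1 ψ) = TensorProduct.map A1 B1 ψ := congrArg (fun f => f ψ) (mapAB A1 B1)
  have hbias_eq : (⟪T0 ψ, P⟫).re + (⟪T1 ψ, Mv⟫).re ≥ 2 * s - ε := by
    rw [hP, hMv, inner_add_right, inner_sub_right, Complex.add_re, Complex.sub_re,
      hT0sym ψ (Q0 ψ), hT0sym ψ (Q1 ψ), hT1sym ψ (Q0 ψ), hT1sym ψ (Q1 ψ),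
      c00, c01, c10, c11]
    linarith [hBias]
  -- norm computations
  have hpar : ‖P‖ ^ 2 + ‖Mv‖ ^ 2 = 4 := by
    have h := parallelogram_law_with_norm ℂ (Q0 ψ) (Q1 ψ)
    rw [hnQ0, hnQ1, hψ] at h
    rw [hP, hMv]
    linear_combination h
  have hu2 : ‖u‖ ^ 2 = 2 - 2 * s * (⟪T0 ψ, P⟫).re + ‖P‖ ^ 2 := by
    rw [hu, @norm_sub_sq ℂ]
    simp only [RCLike.re_to_complex]
    rw [hre_smul, hsmul_norm, hnT0, hψ]
    linear_combination hs2
  have hv2 : ‖v‖ ^ 2 = 2 - 2 * s * (⟪T1 ψ, Mv⟫).re + ‖Mv‖ ^ 2 := by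
    rw [hv, @norm_sub_sq ℂ]
    simp only [RCLike.re_to_complex]
    rw [hre_smul, hsmul_norm,
      (norm_map_bin_apply hA1 isBinaryObservable_id ψ : ‖T1 ψ‖ = ‖ψ‖), hψ]
    linear_combination hs2
  have hu_sq : ‖u‖ ^ 2 ≤ 2 * s * ε :=
    chsh_arith1 s ε _ _ ‖u‖ ‖v‖ ‖P‖ ‖Mv‖ hs2 hs0 hpar hu2 hv2 hbias_eq (norm_nonneg v)
  -- the anticommutator identity
  have e1 : P = (s : ℂ) • T0 ψ - u := by rw [hu, sub_sub_cancel]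
  have hss : (s : ℂ) * (s : ℂ) = 2 := by
    have hr : s * s = 2 := by rw [← pow_two]; exact hs2
    rw [← Complex.ofReal_mul, hr]
    norm_num
  have h1 : Q0 P + Q1 P = (ψ + ψ) + (Q0 (Q1 ψ) + Q1 (Q0 ψ)) := by
    rw [hP, map_add, map_add, invQ0, invQ1]
    abel
  have h2 : Q0 P + Q1 P = (ψ + ψ) - ((s : ℂ) • T0 u + (Q0 u + Q1 u)) := by
    calc Q0 P + Q1 P = Q0 ((s : ℂ) • T0 ψ - u) + Q1 ((s : ℂ) • T0 ψ - u) := by rw [← e1]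
      _ = (s : ℂ) • (T0 (Q0 ψ) + T0 (Q1 ψ)) - (Q0 u + Q1 u) := by
          simp only [map_sub, map_smul, comm0, comm1, smul_add]
          abel
      _ = (s : ℂ) • (T0 ((s : ℂ) • T0 ψ - u)) - (Q0 u + Q1 u) := by
          rw [← map_add, ← hP, e1]
      _ = (ψ + ψ) - ((s : ℂ) • T0 u + (Q0 u + Q1 u)) := by
          rw [map_sub, map_smul, smul_sub, smul_smul, hss, invT0, two_smul]
          abel
  have keyD : Q0 (Q1 ψ) + Q1 (Q0 ψ) = -((s : ℂ) • T0 u + (Q0 u + Q1 u)) := by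
    have h3 := h1.symm.trans h2
    rw [sub_eq_add_neg] at h3
    exact add_left_cancel h3
  -- norm bound on the anticommutator vector
  have hDnorm : ‖Q0 (Q1 ψ) + Q1 (Q0 ψ)‖ ≤ (s + 2) * ‖u‖ := by
    rw [keyD, norm_neg]
    calc ‖(s : ℂ) • T0 u + (Q0 u + Q1 u)‖
        ≤ ‖(s : ℂ) • T0 u‖ + (‖Q0 u‖ + ‖Q1 u‖) :=
          (norm_add_le _ _).trans (by gcongr; exact norm_add_le _ _)
      _ = (s + 2) * ‖u‖ := by rw [hsmul_norm, hnT0, hnQ0, hnQ1]; ring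
  -- identify the goal with the squared norm
  set Dop : H_A ⊗[ℂ] H_B →ₗ[ℂ] H_A ⊗[ℂ] H_B :=
    TensorProduct.map LinearMap.id (B0 ∘ₗ B1 + B1 ∘ₗ B0) with hDopdef
  have hDapp : ∀ x, Dop x = Q0 (Q1 x) + Q1 (Q0 x) := by
    intro x
    have hadd : Dop = TensorProduct.map LinearMap.id (B0 ∘ₗ B1)
        + TensorProduct.map LinearMap.id (B1 ∘ₗ B0) := by
      rw [hDopdef, ← TensorProduct.map_add_right]
    have hcomp0 : TensorProduct.map (LinearMap.id : H_A →ₗ[ℂ] H_A) (B0 ∘ₗ B1) = Q0 ∘ₗ Q1 := by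
      rw [hQ0def, hQ1def, ← TensorProduct.map_comp]
      simp
    have hcomp1 : TensorProduct.map (LinearMap.id : H_A →ₗ[ℂ] H_A) (B1 ∘ₗ B0) = Q1 ∘ₗ Q0 := by
      rw [hQ0def, hQ1def, ← TensorProduct.map_comp]
      simp
    rw [hadd, hcomp0, hcomp1]
    rfl
  have hgoal_eq : TensorProduct.map (LinearMap.id : H_A →ₗ[ℂ] H_A)
      ((B0 ∘ₗ B1 + B1 ∘ₗ B0) ∘ₗ (B0 ∘ₗ B1 + B1 ∘ₗ B0)) ψ = Dop (Dop ψ) := by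
    have h := TensorProduct.map_comp (f₂ := (LinearMap.id : H_A →ₗ[ℂ] H_A)) (f₁ := LinearMap.id)
      (g₂ := B0 ∘ₗ B1 + B1 ∘ₗ B0) (g₁ := B0 ∘ₗ B1 + B1 ∘ₗ B0)
    simp only [LinearMap.id_comp] at h
    rw [h]
    rfl
  have hDsym : ⟪Dop (Dop ψ), ψ⟫ = ⟪Dop ψ, Dop ψ⟫ := by
    rw [hDapp (Dop ψ), inner_add_left, hQ0sym (Q1 (Dop ψ)) ψ, hQ1sym (Q0 (Dop ψ)) ψ,
      hQ1sym (Dop ψ) (Q0 ψ), hQ0sym (Dop ψ) (Q1 ψ), ← inner_add_right,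
      add_comm (Q1 (Q0 ψ)) (Q0 (Q1 ψ)), ← hDapp]
  have hfinal : (⟪ψ, TensorProduct.map (LinearMap.id : H_A →ₗ[ℂ] H_A)
      ((B0 ∘ₗ B1 + B1 ∘ₗ B0) ∘ₗ (B0 ∘ₗ B1 + B1 ∘ₗ B0)) ψ⟫).re = ‖Dop ψ‖ ^ 2 := by
    rw [hgoal_eq, ← inner_conj_symm (𝕜 := ℂ) ψ (Dop (Dop ψ)), hDsym, inner_conj_symm (𝕜 := ℂ) (Dop ψ) (Dop ψ)]
    exact inner_self_eq_norm_sq (𝕜 := ℂ) (Dop ψ)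
  rw [hfinal]
  have hc : cConst = 128 * s := by rw [hs]; rfl
  rw [hc]
  have hD2 : ‖Dop ψ‖ = ‖Q0 (Q1 ψ) + Q1 (Q0 ψ)‖ := by rw [hDapp]
  rw [hD2]
  exact chsh_arith2 s ε ‖u‖ ‖Q0 (Q1 ψ) + Q1 (Q0 ψ)‖ hs2 hs1 hε (norm_nonneg u)
    (norm_nonneg _) hDnorm hu_sq
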